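/- Let T be an irreducible weighted shift (T e_n = α_n e_{n+1} with all α_n > 0) that is a norm limit of complex symmetric operators. Then there exists a subsequence of the weights (α_n) converging to 0. -/

import Mathlib

open Filter Topology ContinuousLinearMap

noncomputable section

def IsConjugation {H : Type*} [NormedAddCommGroup H] [InnerProductSpace ℂ H]
    (C : H → H) : Prop :=
  (∀ x y, C (x + y) = C x + C y) ∧
  (∀ (a : ℂ) (x : H), C (a • x) = (starRingEnd ℂ a) • C x) ∧
  (∀ x, ‖C x‖ = ‖x‖) ∧
  (∀ x, C (C x) = x)

def IsCSO {H : Type*} [NormedAddCommGroup H] [InnerProductSpace ℂ H]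
    [CompleteSpace H] (T : H →L[ℂ] H) : Prop :=
  ∃ C : H → H, IsConjugation C ∧ ∀ x, T x = C (adjoint T (C x))

abbrev L2 : Type := lp (fun _ : ℕ => ℂ) 2

def e (n : ℕ) : L2 := lp.single 2 n 1

local notation "⟪" x ", " y "⟫" => @inner ℂ _ _ x y

lemma inner_e (k : ℕ) (f : L2) : ⟪e k, f⟫ = f k := by
  rw [e, lp.inner_single_left]
  simp [RCLike.inner_apply]

lemma e_orthonormal : Orthonormal ℂ e := by
  rw [orthonormal_iff_ite]
  intro i j
  rw [inner_e, e, lp.single_apply]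
  simp [eq_comm, Pi.single_apply]

lemma norm_e (k : ℕ) : ‖e k‖ = 1 := by
  have := lp.norm_single (E := fun _ : ℕ => ℂ) (p := 2) (by norm_num) k (1 : ℂ)
  simpa [e] using this

lemma hasSum_coords (x : L2) : HasSum (fun n => (x n : ℂ) • e n) x := by
  have := lp.hasSum_single (E := fun _ : ℕ => ℂ) ENNReal.ofNat_ne_top x
  convert this using 2 with n
  rw [e, ← lp.single_smul, smul_eq_mul, mul_one]

lemma coord_succ (α : ℕ → ℝ) (T : L2 →L[ℂ] L2)
    (hT : ∀ n, T (e n) = (α n : ℂ) • e (n + 1)) (x : L2) (k : ℕ) :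
    ⟪e (k + 1), T x⟫ = (α k : ℂ) * x k := by
  have h2 := (((innerSL ℂ (e (k+1))).comp T)).hasSum (hasSum_coords x)
  simp only [map_smul, ContinuousLinearMap.comp_apply, innerSL_apply_apply, hT] at h2
  have h3 : HasSum (fun n => if n = k then (α k : ℂ) * x k else 0)
      (⟪e (k+1), T x⟫) := by
    refine h2.congr_fun fun n => ?_
    rw [inner_e, e, lp.single_apply]
    by_cases h : n = k
    · simp [h, mul_comm]
    · have : ¬ (k + 1 = n + 1) := by omega
      simp [h, this]
  exact h3.unique (hasSum_ite_eq k _)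

lemma coord_zero (α : ℕ → ℝ) (T : L2 →L[ℂ] L2)
    (hT : ∀ n, T (e n) = (α n : ℂ) • e (n + 1)) (x : L2) :
    ⟪e 0, T x⟫ = 0 := by
  have h2 := (((innerSL ℂ (e 0)).comp T)).hasSum (hasSum_coords x)
  simp only [map_smul, ContinuousLinearMap.comp_apply, innerSL_apply_apply, hT] at h2
  have h3 : HasSum (fun _ : ℕ => (0 : ℂ)) (⟪e 0, T x⟫) := by
    refine h2.congr_fun fun n => ?_
    rw [inner_e, e, lp.single_apply]
    simp
  exact h3.unique hasSum_zero

lemma rpow_two_eq (y : ℝ) : y ^ ENNReal.toReal 2 = y ^ 2 := by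
  rw [ENNReal.toReal_ofNat, show ((2:ℝ)) = ((2:ℕ):ℝ) by norm_num, Real.rpow_natCast]

lemma norm_sq_eq (x : L2) : ‖x‖ ^ 2 = ∑' k, ‖x k‖ ^ 2 := by
  have := lp.norm_rpow_eq_tsum (p := 2) (by norm_num) x
  simpa only [rpow_two_eq] using this

lemma summable_coords (x : L2) : Summable (fun k => ‖x k‖ ^ 2) := by
  have := lp.memℓp x
  rw [memℓp_gen_iff (by norm_num)] at this
  simpa only [rpow_two_eq] using this

lemma lower_bound (α : ℕ → ℝ) (T : L2 →L[ℂ] L2)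
    (hT : ∀ n, T (e n) = (α n : ℂ) • e (n + 1)) {δ : ℝ} (hδ : 0 < δ)
    (hd : ∀ n, δ ≤ α n) (x : L2) : δ * ‖x‖ ≤ ‖T x‖ := by
  have horth : Orthonormal ℂ (fun k : ℕ => e (k + 1)) :=
    e_orthonormal.comp _ (fun a b h => by omega)
  have hval : ∀ k : ℕ, ‖(⟪e (k+1), T x⟫ : ℂ)‖ ^ 2 = (α k)^2 * ‖x k‖^2 := by
    intro k
    rw [coord_succ α T hT, norm_mul, mul_pow, Complex.norm_real, Real.norm_eq_abs,
      abs_of_pos (hδ.trans_le (hd k))]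
  have bessel := horth.tsum_inner_products_le (T x)
  simp only [hval] at bessel
  have hsummable := horth.inner_products_summable (x := T x)
  simp only [hval] at hsummable
  have hterm : ∀ k : ℕ, δ^2 * ‖x k‖^2 ≤ (α k)^2 * ‖x k‖^2 := fun k =>
    mul_le_mul_of_nonneg_right
      (pow_le_pow_left₀ hδ.le (hd k) 2) (by positivity)
  have h1 : (δ * ‖x‖)^2 ≤ ‖T x‖^2 := by
    calc (δ * ‖x‖)^2 = δ^2 * ∑' k, ‖x k‖^2 := by rw [mul_pow, norm_sq_eq]
    _ = ∑' k, δ^2 * ‖x k‖^2 := (tsum_mul_left).symm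
    _ ≤ ∑' k, (α k)^2 * ‖x k‖^2 :=
        Summable.tsum_le_tsum hterm ((summable_coords x).mul_left _) hsummable
    _ ≤ ‖T x‖^2 := bessel
  exact le_of_pow_le_pow_left₀ (by norm_num) (norm_nonneg _) h1

lemma adjoint_e_zero (α : ℕ → ℝ) (T : L2 →L[ℂ] L2)
    (hT : ∀ n, T (e n) = (α n : ℂ) • e (n + 1)) :
    ContinuousLinearMap.adjoint T (e 0) = 0 := by
  apply ext_inner_right ℂ
  intro y
  rw [ContinuousLinearMap.adjoint_inner_left, coord_zero α T hT, inner_zero_left]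

/-- If an irreducible weighted shift is a norm limit of complex symmetric
operators, then some subsequence of its weights converges to `0`. -/
theorem weights_subseq_to_zero (α : ℕ → ℝ) (hα : ∀ n, 0 < α n)
    (T : L2 →L[ℂ] L2) (hT : ∀ n, T (e n) = (α n : ℂ) • e (n + 1))
    (hlim : ∃ Tseq : ℕ → (L2 →L[ℂ] L2), (∀ n, IsCSO (Tseq n)) ∧
      Tendsto Tseq atTop (𝓝 T)) :
    ∃ φ : ℕ → ℕ, StrictMono φ ∧ Tendsto (fun k => α (φ k)) atTop (𝓝 0) := by
  by_cases hbig : ∃ δ > 0, ∀ n, δ ≤ α n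
  · exfalso
    obtain ⟨δ, hδ, hd⟩ := hbig
    obtain ⟨Tseq, hCSO, htends⟩ := hlim
    obtain ⟨N, hN⟩ := Metric.tendsto_atTop.mp htends (δ/2) (by positivity)
    have hdist : ‖Tseq N - T‖ < δ/2 := by
      have := hN N le_rfl; rwa [dist_eq_norm] at this
    obtain ⟨C, hC, hS⟩ := hCSO N
    set S := Tseq N with hSdef
    have hadj : ‖ContinuousLinearMap.adjoint S (e 0)‖ ≤ ‖S - T‖ := by
      have h0 := adjoint_e_zero α T hT
      have h1 : ContinuousLinearMap.adjoint S (e 0)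
          = (ContinuousLinearMap.adjoint (S - T)) (e 0) := by
        rw [map_sub, ContinuousLinearMap.sub_apply, h0, sub_zero]
      calc ‖ContinuousLinearMap.adjoint S (e 0)‖
          = ‖(ContinuousLinearMap.adjoint (S - T)) (e 0)‖ := by rw [h1]
        _ ≤ ‖ContinuousLinearMap.adjoint (S - T)‖ * ‖e 0‖ :=
            ContinuousLinearMap.le_opNorm _ _
        _ = ‖S - T‖ := by
            rw [norm_e, mul_one, LinearIsometryEquiv.norm_map]
    have hCe : ‖C (e 0)‖ = 1 := by rw [hC.2.2.1, norm_e]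
    have hS1 : ‖S (C (e 0))‖ = ‖ContinuousLinearMap.adjoint S (e 0)‖ := by
      rw [hS (C (e 0)), hC.2.2.1, hC.2.2.2]
    have main := lower_bound α T hT hδ hd (C (e 0))
    rw [hCe, mul_one] at main
    have htri : ‖T (C (e 0))‖ ≤ ‖(T - S) (C (e 0))‖ + ‖S (C (e 0))‖ := by
      have : T (C (e 0)) = (T - S) (C (e 0)) + S (C (e 0)) := by
        rw [ContinuousLinearMap.sub_apply]; ring_nf
        abel
      rw [this]; exact norm_add_le _ _
    have hTS : ‖(T - S) (C (e 0))‖ ≤ ‖T - S‖ := by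
      calc ‖(T - S) (C (e 0))‖ ≤ ‖T - S‖ * ‖C (e 0)‖ := ContinuousLinearMap.le_opNorm _ _
        _ = ‖T - S‖ := by rw [hCe, mul_one]
    have hrev : ‖T - S‖ = ‖S - T‖ := norm_sub_rev _ _
    linarith
  · push_neg at hbig
    have freq : ∀ m : ℕ, ∃ᶠ k in atTop, α k < 1/((m:ℝ)+1) := by
      intro m
      rw [Filter.frequently_atTop]
      intro N
      have hne : (Finset.range (N+1)).Nonempty := ⟨0, by simp⟩
      have hpos : 0 < min (1/((m:ℝ)+1)) ((Finset.range (N+1)).inf' hne α) := by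
        apply lt_min (by positivity)
        rw [Finset.lt_inf'_iff]
        intro i _
        exact hα i
      obtain ⟨n, hn⟩ := hbig _ hpos
      refine ⟨n, ?_, lt_of_lt_of_le hn (min_le_left _ _)⟩
      by_contra hcon
      push_neg at hcon
      have hmem : n ∈ Finset.range (N+1) := by simp; omega
      have : min (1/((m:ℝ)+1)) ((Finset.range (N+1)).inf' hne α) ≤ α n :=
        le_trans (min_le_right _ _) (Finset.inf'_le _ hmem)
      exact absurd hn (not_lt.mpr this)
    obtain ⟨φ, hφmono, hφ⟩ := Filter.extraction_forall_of_frequently freq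
    refine ⟨φ, hφmono, ?_⟩
    exact squeeze_zero (fun k => (hα _).le) (fun k => (hφ k).le)
      tendsto_one_div_add_atTop_nhds_zero_nat
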